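/- arXiv:2406.12855 — 2 statements merged into one kernel-verified Lean document; each statement's English description precedes it below -/
import Mathlib

section
/- Let ψ : ℝ⁴ → Cl be twice continuously differentiable, let K_μ : ℝ⁴ → Cl (μ ∈ {0,1,2,3}) be differentiable maps with ∂_μψ(x) = K_μ(x)·ψ(x) for all x and μ, and suppose ψ(x)·reverse(ψ(x)) = 1 for all x. Then for all μ, ν ∈ {0,1,2,3} and all x: ∂_νK_μ(x) − ∂_μK_ν(x) = K_ν(x)·K_μ(x) − K_μ(x)·K_ν(x). (Integrability of the Killing spin field equation forces the connection K to be flat.) -/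
open CliffordAlgebra

noncomputable section

/-- The Minkowski signs `(-1,1,…,1)` on `ℝ^{10}`. -/
def ηv : Fin 10 → ℝ := fun I => if I = 0 then -1 else 1

/-- The Minkowski metric `η = diag(-1,1,…,1)` as a matrix. -/
def ηm : Fin 10 → Fin 10 → ℝ := fun I J => if I = J then ηv I else 0

/-- The Minkowski quadratic form `Q(x) = -x₀² + x₁² + ⋯ + x₉²` on `ℝ^{10}`. -/
def Qm : QuadraticForm ℝ (Fin 10 → ℝ) := QuadraticMap.weightedSumSquares ℝ ηv

/-- The Clifford algebra of the Minkowski form on `ℝ^{10}`. -/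
abbrev Cl := CliffordAlgebra Qm

/-- The images `e_I` of the standard basis vectors of `ℝ^{10}` in `Cl`. -/
def e (I : Fin 10) : Cl := ι Qm (Pi.single I 1)

/-- Inclusion of tangent indices `{0,…,3}` into `{0,…,9}`. -/
def tIdx (μ : Fin 4) : Fin 10 := ⟨μ.1, by omega⟩

/-- Inclusion of normal indices `{4,…,9}` into `{0,…,9}`. -/
def nIdx (i : Fin 6) : Fin 10 := ⟨i.1 + 4, by omega⟩



def Sfn (s : Finset (Fin 10)) : Cl := ((s.sort (· ≤ ·)).map e).prod

lemma Sfn_empty : Sfn ∅ = 1 := by simp [Sfn]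

lemma Sfn_insert {a : Fin 10} {s : Finset (Fin 10)} (h1 : ∀ b ∈ s, a ≤ b) (h2 : a ∉ s) :
    Sfn (insert a s) = e a * Sfn s := by
  rw [Sfn, Finset.sort_insert _ h1 h2]
  simp [Sfn]

lemma ortho {i j : Fin 10} (h : i ≠ j) :
    Qm.IsOrtho (Pi.single i (1:ℝ)) (Pi.single j 1) := by
  simp only [QuadraticMap.isOrtho_def, Qm, QuadraticMap.weightedSumSquares_apply]
  rw [← Finset.sum_add_distrib]
  congr 1
  ext k
  rcases eq_or_ne k i with rfl | hki <;> rcases eq_or_ne k j with rfl | hkj <;>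
    simp_all [Pi.single_apply]

lemma e_mul_e_neg {i j : Fin 10} (h : i ≠ j) : e i * e j = - (e j * e i) := by
  have := ι_mul_ι_add_swap_of_isOrtho (ortho h)
  rw [e, e]
  exact eq_neg_of_add_eq_zero_left this

lemma e_mul_self (i : Fin 10) : e i * e i = algebraMap ℝ Cl (Qm (Pi.single i 1)) :=
  ι_sq_scalar Qm _

lemma key : ∀ (n : ℕ) (s : Finset (Fin 10)), s.card ≤ n → ∀ i : Fin 10,
    e i * Sfn s ∈ Submodule.span ℝ (Sfn '' {t : Finset (Fin 10) | t ⊆ insert i s}) := by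
  intro n
  induction n with
  | zero =>
    intro s hs i
    rw [Finset.card_eq_zero.mp (Nat.le_zero.mp hs)]
    have h1 : e i * Sfn ∅ = Sfn {i} := by
      rw [Sfn_empty, mul_one, Sfn]; simp
    rw [h1]
    exact Submodule.subset_span ⟨{i}, by simp, rfl⟩
  | succ n IH =>
    intro s hs i
    rcases s.eq_empty_or_nonempty with rfl | hne
    · have h1 : e i * Sfn ∅ = Sfn {i} := by
        rw [Sfn_empty, mul_one, Sfn]; simp
      rw [h1]
      exact Submodule.subset_span ⟨{i}, by simp, rfl⟩
    · set m := s.min' hne with hmdef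
      have hm : m ∈ s := s.min'_mem hne
      have hss : Sfn s = e m * Sfn (s.erase m) := by
        conv_lhs => rw [← Finset.insert_erase hm]
        exact Sfn_insert (fun b hb => s.min'_le b (Finset.mem_of_mem_erase hb))
          (Finset.notMem_erase _ _)
      rcases lt_trichotomy i m with hlt | heq | hgt
      · have h1 : ∀ b ∈ s, i ≤ b := fun b hb => le_of_lt (lt_of_lt_of_le hlt (s.min'_le b hb))
        have h2 : i ∉ s := fun h => absurd (s.min'_le i h) (not_le.2 hlt)
        rw [← Sfn_insert h1 h2]
        exact Submodule.subset_span ⟨insert i s, fun a ha => ha, rfl⟩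
      · rw [heq, hss, ← mul_assoc, e_mul_self, ← Algebra.smul_def]
        exact Submodule.smul_mem _ _ (Submodule.subset_span
          ⟨s.erase m, fun a ha => Finset.mem_insert_of_mem (Finset.mem_of_mem_erase ha), rfl⟩)
      · have hne' : i ≠ m := ne_of_gt hgt
        have h3 := IH (s.erase m) (by
          have := Finset.card_erase_of_mem hm
          omega) i
        have hstep : e i * Sfn s = -(e m * (e i * Sfn (s.erase m))) := by
          rw [hss, ← mul_assoc, e_mul_e_neg hne', neg_mul, mul_assoc]
        rw [hstep]
        apply neg_mem
        refine Submodule.span_induction (p := fun z _ =>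
          e m * z ∈ Submodule.span ℝ (Sfn '' {t : Finset (Fin 10) | t ⊆ insert i s}))
          ?_ ?_ ?_ ?_ h3
        · rintro z ⟨t, ht, rfl⟩
          have htgt : ∀ b ∈ t, m < b := by
            intro b hb
            rcases Finset.mem_insert.mp (ht hb) with rfl | hb'
            · exact hgt
            · exact lt_of_le_of_ne (s.min'_le b (Finset.mem_of_mem_erase hb'))
                (Ne.symm (Finset.ne_of_mem_erase hb'))
          have hmn : m ∉ t := fun h => lt_irrefl m (htgt m h)
          rw [← Sfn_insert (fun b hb => le_of_lt (htgt b hb)) hmn]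
          refine Submodule.subset_span ⟨insert m t, ?_, rfl⟩
          intro a ha
          rcases Finset.mem_insert.mp ha with rfl | ha'
          · exact Finset.mem_insert_of_mem hm
          · rcases Finset.mem_insert.mp (ht ha') with rfl | ha''
            · exact Finset.mem_insert_self _ _
            · exact Finset.mem_insert_of_mem (Finset.mem_of_mem_erase ha'')
        · simp
        · intro a b _ _ ha hb
          rw [mul_add]; exact add_mem ha hb
        · intro c a _ ha
          rw [mul_smul_comm]; exact Submodule.smul_mem _ _ ha

lemma e_mul_mem {p : Cl} (hp : p ∈ Submodule.span ℝ (Set.range Sfn)) (i : Fin 10) :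
    e i * p ∈ Submodule.span ℝ (Set.range Sfn) := by
  refine Submodule.span_induction (p := fun z _ =>
    e i * z ∈ Submodule.span ℝ (Set.range Sfn)) ?_ ?_ ?_ ?_ hp
  · rintro z ⟨s, rfl⟩
    refine Submodule.span_le.mpr ?_ (key s.card s le_rfl i)
    rintro z ⟨t, _, rfl⟩
    exact Submodule.subset_span ⟨t, rfl⟩
  · simp
  · intro a b _ _ ha hb
    rw [mul_add]; exact add_mem ha hb
  · intro c a _ ha
    rw [mul_smul_comm]; exact Submodule.smul_mem _ _ ha

lemma span_Sfn_top : Submodule.span ℝ (Set.range Sfn) = ⊤ := by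
  rw [eq_top_iff]
  have hmul : ∀ x : Cl, ∀ p ∈ Submodule.span ℝ (Set.range Sfn),
      x * p ∈ Submodule.span ℝ (Set.range Sfn) := by
    intro x
    induction x using CliffordAlgebra.induction with
    | algebraMap r =>
      intro p hp
      rw [← Algebra.smul_def]
      exact Submodule.smul_mem _ _ hp
    | ι v =>
      intro p hp
      have hv : (ι Qm) v * p = ∑ i : Fin 10, v i • (e i * p) := by
        have : v = ∑ i : Fin 10, v i • (Pi.single i (1:ℝ) : Fin 10 → ℝ) := by
          funext k
          simp [Pi.single_apply]
        conv_lhs => rw [this]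
        rw [map_sum, Finset.sum_mul]
        congr 1
        funext i
        rw [map_smul, smul_mul_assoc]
        rfl
      rw [hv]
      exact Submodule.sum_mem _ fun i _ => Submodule.smul_mem _ _ (e_mul_mem hp i)
    | mul a b ha hb =>
      intro p hp
      rw [mul_assoc]
      exact ha _ (hb _ hp)
    | add a b ha hb =>
      intro p hp
      rw [add_mul]
      exact add_mem (ha _ hp) (hb _ hp)
  intro x _
  have h1 : (1 : Cl) ∈ Submodule.span ℝ (Set.range Sfn) :=
    Sfn_empty ▸ Submodule.subset_span ⟨∅, rfl⟩
  simpa using hmul x 1 h1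

instance : Module.Finite ℝ Cl := by
  classical
  exact ⟨⟨Finset.univ.image Sfn, by
    rw [Finset.coe_image, Finset.coe_univ, Set.image_univ]; exact span_Sfn_top⟩⟩


/-- Integrability of `∂_μψ = K_μψ` for an invertible (normalized) spin field forces the
connection `K` to be flat: `∂_νK_μ − ∂_μK_ν = K_νK_μ − K_μK_ν`. -/
theorem stmt_3 (nCl : AddGroupNorm Cl)
    (hns : ∀ (c : ℝ) (x : Cl), nCl (c • x) ≤ ‖c‖ * nCl x) :
    letI : NormedAddCommGroup Cl := nCl.toNormedAddCommGroup
    letI : NormedSpace ℝ Cl := { norm_smul_le := hns }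
    ∀ (ψ : (Fin 4 → ℝ) → Cl) (K : Fin 4 → (Fin 4 → ℝ) → Cl),
      ContDiff ℝ 2 ψ →
      (∀ μ, Differentiable ℝ (K μ)) →
      (∀ μ x, fderiv ℝ ψ x (Pi.single μ 1) = K μ x * ψ x) →
      (∀ x, ψ x * reverse (Q := Qm) (ψ x) = 1) →
      ∀ (μ ν : Fin 4) (x : Fin 4 → ℝ),
        fderiv ℝ (K μ) x (Pi.single ν 1) - fderiv ℝ (K ν) x (Pi.single μ 1) =
          K ν x * K μ x - K μ x * K ν x := by
  letI : NormedAddCommGroup Cl := nCl.toNormedAddCommGroup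
  letI : NormedSpace ℝ Cl := { norm_smul_le := hns }
  intro ψ K hψ hK hd hrev μ ν x
  have hinv : ∀ y : Fin 4 → ℝ, ∃ φ : Cl, ψ y * φ = 1 := fun y => ⟨_, hrev y⟩
  have hψd : Differentiable ℝ ψ := hψ.differentiable (by norm_num)
  have hψ'c : ContDiff ℝ 1 (fderiv ℝ ψ) := hψ.fderiv_right (by norm_num)
  have hψ'd : Differentiable ℝ (fderiv ℝ ψ) := hψ'c.differentiable (by norm_num)
  set B : Cl →L[ℝ] Cl →L[ℝ] Cl :=
    LinearMap.toContinuousLinearMap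
      (((LinearMap.toContinuousLinearMap :
          (Cl →ₗ[ℝ] Cl) ≃ₗ[ℝ] (Cl →L[ℝ] Cl)).toLinearMap).comp (LinearMap.mul ℝ Cl)) with hBdef
  have hB : ∀ a b : Cl, B a b = a * b := by
    intro a b
    simp [hBdef]
  set f'' := fderiv ℝ (fderiv ℝ ψ) x with hf''
  have h1 : HasFDerivAt (fderiv ℝ ψ) f'' x := (hψ'd x).hasFDerivAt
  -- for each κ, second derivative formula
  have hmix : ∀ κ : Fin 4, ∀ w : Fin 4 → ℝ,
      f'' w (Pi.single κ 1) =
        K κ x * (fderiv ℝ ψ x w) + (fderiv ℝ (K κ) x w) * ψ x := by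
    intro κ w
    have step1 : HasFDerivAt (fun y => fderiv ℝ ψ y (Pi.single κ 1))
        (f''.flip (Pi.single κ 1)) x := by
      have := h1.clm_apply (hasFDerivAt_const (Pi.single κ (1:ℝ)) x)
      simpa using this
    have step2 : HasFDerivAt (fun y => fderiv ℝ ψ y (Pi.single κ 1))
        ((B (K κ x)).comp (fderiv ℝ ψ x) + (B.comp (fderiv ℝ (K κ) x)).flip (ψ x)) x := by
      have hc : HasFDerivAt (fun y => B (K κ y)) (B.comp (fderiv ℝ (K κ) x)) x :=
        (B.hasFDerivAt.comp x (hK κ x).hasFDerivAt)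
      have := hc.clm_apply (hψd x).hasFDerivAt
      have heq : (fun y => B (K κ y) (ψ y)) = fun y => fderiv ℝ ψ y (Pi.single κ 1) := by
        funext y
        rw [hB, hd]
      rw [heq] at this
      simpa using this
    have huniq := step1.unique step2
    have := congrArg (fun (L : (Fin 4 → ℝ) →L[ℝ] Cl) => L w) huniq
    simpa [hB] using this
  have hsymm := second_derivative_symmetric (f' := fderiv ℝ ψ)
    (fun y => (hψd y).hasFDerivAt) h1 (Pi.single ν 1) (Pi.single μ 1)
  have hkey : K μ x * (K ν x * ψ x) + fderiv ℝ (K μ) x (Pi.single ν 1) * ψ x =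
      K ν x * (K μ x * ψ x) + fderiv ℝ (K ν) x (Pi.single μ 1) * ψ x := by
    have e1 := hmix μ (Pi.single ν 1)
    have e2 := hmix ν (Pi.single μ 1)
    rw [hd ν x] at e1
    rw [hd μ x] at e2
    rw [e1, e2] at hsymm
    exact hsymm
  obtain ⟨φ, hφ⟩ := hinv x
  have hab : K μ x * K ν x + fderiv ℝ (K μ) x (Pi.single ν 1) =
      K ν x * K μ x + fderiv ℝ (K ν) x (Pi.single μ 1) := by
    have h2 : (K μ x * K ν x + fderiv ℝ (K μ) x (Pi.single ν 1)) * ψ x =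
        (K ν x * K μ x + fderiv ℝ (K ν) x (Pi.single μ 1)) * ψ x := by
      rw [add_mul, add_mul, mul_assoc, mul_assoc]
      exact hkey
    calc K μ x * K ν x + fderiv ℝ (K μ) x (Pi.single ν 1)
        = (K μ x * K ν x + fderiv ℝ (K μ) x (Pi.single ν 1)) * (ψ x * φ) := by
          rw [hφ, mul_one]
      _ = ((K μ x * K ν x + fderiv ℝ (K μ) x (Pi.single ν 1)) * ψ x) * φ := by
          rw [mul_assoc]
      _ = ((K ν x * K μ x + fderiv ℝ (K ν) x (Pi.single μ 1)) * ψ x) * φ := by rw [h2]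
      _ = _ := by rw [mul_assoc, hφ, mul_one]
  rw [sub_eq_sub_iff_add_eq_add]
  calc fderiv ℝ (K μ) x (Pi.single ν 1) + K μ x * K ν x
      = K μ x * K ν x + fderiv ℝ (K μ) x (Pi.single ν 1) := add_comm _ _
    _ = K ν x * K μ x + fderiv ℝ (K ν) x (Pi.single μ 1) := hab
end
end

section
/- Let f, h⁰, h¹, h², h³ : ℝ⁴ → ℝ be differentiable with f(x) ≠ 0 for all x and with the normalization f(x)² + Σ_{μ=0}^{3} η_{μμ}·(h^μ(x))² = 1 for all x. Define ψ(x) := f(x)·1 + Σ_{μ=0}^{3} h^μ(x)·e_μ e₅, H_α^{μ5} := 2f²·∂_α( h^μ / f ), and ω_α^{μν} := (1/f)·( H_α^{μ5}·h^ν − H_α^{ν5}·h^μ ). Then reverse(ψ)·ψ = 1 everywhere, and ψ satisfies the Killing spin field equation with these coefficients and with all other coefficients zero; that is, for every α ∈ {0,1,2,3}: ∂_αψ = ( (1/4)·Σ_{μ,ν=0}^{3} ω_α^{μν}·e_μ e_ν + (1/2)·Σ_{μ=0}^{3} H_α^{μ5}·e_μ e₅ )·ψ. (Spin fields of the type f +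 f^{μ5}e_μe₅ solve the Killing spin field equation, with extrinsic curvature only in the e₅-direction and vanishing normal connection.) -/
open CliffordAlgebra

noncomputable section

/-- The spin field `ψ = f·1 + Σ_μ h^μ·e_μe₅`. -/
def ψA (f : (Fin 4 → ℝ) → ℝ) (h : Fin 4 → (Fin 4 → ℝ) → ℝ) (x : Fin 4 → ℝ) : Cl :=
  f x • (1 : Cl) + ∑ μ : Fin 4, h μ x • (e (tIdx μ) * e 5)

/-- The extrinsic curvature `H_α^{μ5} = 2f²·∂_α(h^μ/f)`. -/
def HA (f : (Fin 4 → ℝ) → ℝ) (h : Fin 4 → (Fin 4 → ℝ) → ℝ)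
    (α μ : Fin 4) (x : Fin 4 → ℝ) : ℝ :=
  2 * (f x) ^ 2 * fderiv ℝ (fun y => h μ y / f y) x (Pi.single α 1)

/-- The connection `ω_α^{μν} = (1/f)·(H_α^{μ5}h^ν − H_α^{ν5}h^μ)`. -/
def ωA (f : (Fin 4 → ℝ) → ℝ) (h : Fin 4 → (Fin 4 → ℝ) → ℝ)
    (α μ ν : Fin 4) (x : Fin 4 → ℝ) : ℝ :=
  (1 / f x) * (HA f h α μ x * h ν x - HA f h α ν x * h μ x)

/-! ### Auxiliary algebraic lemmas -/

lemma Qm_single (I : Fin 10) : Qm (Pi.single I 1) = ηv I := by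
  simp [Qm, QuadraticMap.weightedSumSquares_apply, Pi.single_apply]

set_option linter.unnecessarySeqFocus false in
lemma polar_single (I J : Fin 10) :
    QuadraticMap.polar Qm (Pi.single I 1) (Pi.single J 1) = 2 * ηm I J := by
  simp only [QuadraticMap.polar, Qm, QuadraticMap.weightedSumSquares_apply, smul_eq_mul,
    Pi.add_apply, Pi.single_apply]
  rw [← Finset.sum_sub_distrib, ← Finset.sum_sub_distrib]
  have key : ∀ i : Fin 10,
      ηv i * (((if i = I then (1:ℝ) else 0) + if i = J then 1 else 0) *
        ((if i = I then (1:ℝ) else 0) + if i = J then 1 else 0)) -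
      ηv i * ((if i = I then (1:ℝ) else 0) * if i = I then 1 else 0) -
      ηv i * ((if i = J then (1:ℝ) else 0) * if i = J then 1 else 0)
      = if i = I then (if I = J then 2 * ηv I else 0) else 0 := by
    intro i
    by_cases h1 : i = I <;> by_cases h2 : i = J <;> subst_eqs <;> simp_all <;> ring
  rw [Finset.sum_congr rfl fun i _ => key i, Finset.sum_ite_eq' Finset.univ I, ηm]
  simp [mul_comm]

lemma e_mul_e_add (I J : Fin 10) :
    e I * e J + e J * e I = (2 * ηm I J) • (1 : Cl) := by
  rw [e, e, ι_mul_ι_add_swap, polar_single, Algebra.algebraMap_eq_smul_one]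

lemma e_sq (I : Fin 10) : e I * e I = ηv I • (1 : Cl) := by
  rw [e, ι_sq_scalar, Qm_single, Algebra.algebraMap_eq_smul_one]

lemma e_anticomm {I J : Fin 10} (h : I ≠ J) : e I * e J = -(e J * e I) := by
  have h2 := e_mul_e_add I J
  rw [ηm, if_neg h] at h2
  simp only [mul_zero, zero_smul] at h2
  exact eq_neg_of_add_eq_zero_left h2

lemma tIdx_ne_five (μ : Fin 4) : tIdx μ ≠ 5 := by
  intro hc
  have := congrArg Fin.val hc
  simp [tIdx] at this
  omega

lemma tIdx_inj {μ ν : Fin 4} (h : tIdx μ = tIdx ν) : μ = ν := by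
  have := congrArg Fin.val h
  simp [tIdx] at this
  exact Fin.ext this

lemma ηm_tIdx (μ ν : Fin 4) : ηm (tIdx μ) (tIdx ν) = if μ = ν then ηv (tIdx μ) else 0 := by
  rw [ηm]
  by_cases h : μ = ν
  · simp [h]
  · rw [if_neg (fun hc => h (tIdx_inj hc)), if_neg h]

lemma e5_sq : e 5 * e 5 = 1 := by
  rw [e_sq, show ηv 5 = 1 from if_neg (by decide), one_smul]

lemma E5E5 (μ ν : Fin 4) :
    (e (tIdx μ) * e 5) * (e (tIdx ν) * e 5) = -(e (tIdx μ) * e (tIdx ν)) := by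
  have h1 : e 5 * e (tIdx ν) = -(e (tIdx ν) * e 5) :=
    e_anticomm (fun hc => tIdx_ne_five ν hc.symm)
  calc (e (tIdx μ) * e 5) * (e (tIdx ν) * e 5)
      = e (tIdx μ) * (e 5 * e (tIdx ν)) * e 5 := by noncomm_ring
    _ = -(e (tIdx μ) * e (tIdx ν)) := by
        rw [h1]
        simp [mul_assoc, e5_sq]

lemma quad (c d : Fin 4 → ℝ) :
    (∑ μ : Fin 4, ∑ ν : Fin 4, (c μ * d ν) • (e (tIdx μ) * e (tIdx ν)))
      + (∑ μ : Fin 4, ∑ ν : Fin 4, (c ν * d μ) • (e (tIdx μ) * e (tIdx ν)))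
    = (2 * ∑ μ : Fin 4, ηv (tIdx μ) * (c μ * d μ)) • (1 : Cl) := by
  have swap : (∑ μ : Fin 4, ∑ ν : Fin 4, (c ν * d μ) • (e (tIdx μ) * e (tIdx ν)))
      = ∑ μ : Fin 4, ∑ ν : Fin 4, (c μ * d ν) • (e (tIdx ν) * e (tIdx μ)) :=
    Finset.sum_comm
  rw [swap, ← Finset.sum_add_distrib]
  calc (∑ μ : Fin 4, ((∑ ν : Fin 4, (c μ * d ν) • (e (tIdx μ) * e (tIdx ν)))
          + ∑ ν : Fin 4, (c μ * d ν) • (e (tIdx ν) * e (tIdx μ))))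
      = ∑ μ : Fin 4, ∑ ν : Fin 4,
          (c μ * d ν) • ((2 * ηm (tIdx μ) (tIdx ν)) • (1:Cl)) := by
        refine Finset.sum_congr rfl fun μ _ => ?_
        rw [← Finset.sum_add_distrib]
        refine Finset.sum_congr rfl fun ν _ => ?_
        rw [← smul_add, e_mul_e_add]
    _ = ∑ μ : Fin 4, (2 * (ηv (tIdx μ) * (c μ * d μ))) • (1:Cl) := by
        refine Finset.sum_congr rfl fun μ _ => ?_
        rw [Finset.sum_eq_single μ]
        · rw [ηm_tIdx, if_pos rfl, smul_smul]; ring_nf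
        · intro ν _ hν
          rw [ηm_tIdx, if_neg (Ne.symm hν)]
          simp
        · simp
    _ = (2 * ∑ μ : Fin 4, ηv (tIdx μ) * (c μ * d μ)) • (1 : Cl) := by
        rw [Finset.mul_sum, ← Finset.sum_smul]

lemma KK (c d : Fin 4 → ℝ) :
    (∑ μ : Fin 4, c μ • (e (tIdx μ) * e 5)) * (∑ ν : Fin 4, d ν • (e (tIdx ν) * e 5))
      = -∑ μ : Fin 4, ∑ ν : Fin 4, (c μ * d ν) • (e (tIdx μ) * e (tIdx ν)) := by
  rw [Finset.sum_mul_sum]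
  rw [← Finset.sum_neg_distrib]
  refine Finset.sum_congr rfl fun μ _ => ?_
  rw [← Finset.sum_neg_distrib]
  refine Finset.sum_congr rfl fun ν _ => ?_
  rw [smul_mul_smul_comm, E5E5, smul_neg]

lemma rev_mul (a : ℝ) (b : Fin 4 → ℝ) :
    (a • (1:Cl) - ∑ μ : Fin 4, b μ • (e (tIdx μ) * e 5))
      * (a • (1:Cl) + ∑ μ : Fin 4, b μ • (e (tIdx μ) * e 5))
    = (a^2 + ∑ μ : Fin 4, ηv (tIdx μ) * (b μ)^2) • (1 : Cl) := by
  set K := ∑ μ : Fin 4, b μ • (e (tIdx μ) * e 5) with hK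
  set X := ∑ μ : Fin 4, ∑ ν : Fin 4, (b μ * b ν) • (e (tIdx μ) * e (tIdx ν)) with hX
  have hKK : K * K = -X := KK b b
  have hswap : (∑ μ : Fin 4, ∑ ν : Fin 4, (b ν * b μ) • (e (tIdx μ) * e (tIdx ν))) = X :=
    Finset.sum_congr rfl fun μ _ => Finset.sum_congr rfl fun ν _ => by rw [mul_comm (b ν)]
  have hX1 : X = (∑ μ : Fin 4, ηv (tIdx μ) * (b μ)^2) • (1 : Cl) := by
    have h2 : (2:ℝ) • X = (2:ℝ) • ((∑ μ : Fin 4, ηv (tIdx μ) * (b μ)^2) • (1 : Cl)) := by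
      calc (2:ℝ) • X = X + (∑ μ : Fin 4, ∑ ν : Fin 4, (b ν * b μ) • (e (tIdx μ) * e (tIdx ν))) := by
            rw [hswap, two_smul]
        _ = (2 * ∑ μ : Fin 4, ηv (tIdx μ) * (b μ * b μ)) • (1 : Cl) := quad b b
        _ = (2:ℝ) • ((∑ μ : Fin 4, ηv (tIdx μ) * (b μ)^2) • (1 : Cl)) := by
            rw [smul_smul]
            congr 2
            exact Finset.sum_congr rfl fun μ _ => by ring
    exact smul_right_injective Cl (by norm_num) h2
  rw [sub_mul, mul_add, mul_add, hKK, smul_mul_smul_comm, mul_one,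
    smul_mul_assoc, one_mul, mul_smul_comm, mul_one, hX1, add_smul]
  module

lemma key_s8 (a aα : ℝ) (b bα : Fin 4 → ℝ)
    (hc : a * aα + ∑ μ : Fin 4, ηv (tIdx μ) * (b μ * bα μ) = 0) :
    ((1/4:ℝ) • ∑ μ : Fin 4, ∑ ν : Fin 4,
        (2*(bα μ * b ν - bα ν * b μ)) • (e (tIdx μ) * e (tIdx ν))
      + (1/2:ℝ) • ∑ μ : Fin 4, (2*(a * bα μ - b μ * aα)) • (e (tIdx μ) * e 5))
    = (aα • (1:Cl) + ∑ μ : Fin 4, bα μ • (e (tIdx μ) * e 5))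
      * (a • (1:Cl) - ∑ μ : Fin 4, b μ • (e (tIdx μ) * e 5)) := by
  set K := ∑ μ : Fin 4, b μ • (e (tIdx μ) * e 5) with hK
  set Kα := ∑ μ : Fin 4, bα μ • (e (tIdx μ) * e 5) with hKα
  set X := ∑ μ : Fin 4, ∑ ν : Fin 4, (bα μ * b ν) • (e (tIdx μ) * e (tIdx ν)) with hX
  set X' := ∑ μ : Fin 4, ∑ ν : Fin 4, (bα ν * b μ) • (e (tIdx μ) * e (tIdx ν)) with hX'
  have hKαK : Kα * K = -X := KK bα b
  have hRHS : (aα • (1:Cl) + Kα) * (a • (1:Cl) - K)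
      = (a*aα) • (1:Cl) - aα • K + a • Kα + X := by
    rw [add_mul, mul_sub, mul_sub, hKαK, smul_mul_smul_comm, mul_one,
      smul_mul_assoc, one_mul, mul_smul_comm, mul_one]
    module
  rw [hRHS]
  have hsum : X + X' = (-2*(a*aα)) • (1:Cl) := by
    rw [hX, hX', quad bα b]
    congr 1
    have h3 : ∑ μ : Fin 4, ηv (tIdx μ) * (bα μ * b μ)
        = ∑ μ : Fin 4, ηv (tIdx μ) * (b μ * bα μ) :=
      Finset.sum_congr rfl fun μ _ => by ring
    rw [h3]
    linarith
  have ht1 : (∑ μ : Fin 4, ∑ ν : Fin 4,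
      (2*(bα μ * b ν - bα ν * b μ)) • (e (tIdx μ) * e (tIdx ν)))
      = (2:ℝ) • X - (2:ℝ) • X' := by
    rw [hX, hX', Finset.smul_sum, Finset.smul_sum, ← Finset.sum_sub_distrib]
    refine Finset.sum_congr rfl fun μ _ => ?_
    rw [Finset.smul_sum, Finset.smul_sum, ← Finset.sum_sub_distrib]
    refine Finset.sum_congr rfl fun ν _ => ?_
    rw [smul_smul, smul_smul, ← sub_smul]
    congr 1
    ring
  have ht2 : (∑ μ : Fin 4, (2*(a * bα μ - b μ * aα)) • (e (tIdx μ) * e 5))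
      = (2:ℝ) • (a • Kα) - (2:ℝ) • (aα • K) := by
    rw [hK, hKα, Finset.smul_sum, Finset.smul_sum, Finset.smul_sum, Finset.smul_sum,
      ← Finset.sum_sub_distrib]
    refine Finset.sum_congr rfl fun μ _ => ?_
    rw [smul_smul, smul_smul, smul_smul, smul_smul, ← sub_smul]
    congr 1
    ring
  rw [ht1, ht2]
  have hX'eq : X' = (-2*(a*aα)) • (1:Cl) - X := by
    rw [← hsum]; abel
  rw [hX'eq]
  module

lemma keyfinal (a aα : ℝ) (b bα : Fin 4 → ℝ)
    (hc : a * aα + ∑ μ : Fin 4, ηv (tIdx μ) * (b μ * bα μ) = 0)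
    (hnorm : a^2 + ∑ μ : Fin 4, ηv (tIdx μ) * (b μ)^2 = 1) :
    ((1/4:ℝ) • ∑ μ : Fin 4, ∑ ν : Fin 4,
        (2*(bα μ * b ν - bα ν * b μ)) • (e (tIdx μ) * e (tIdx ν))
      + (1/2:ℝ) • ∑ μ : Fin 4, (2*(a * bα μ - b μ * aα)) • (e (tIdx μ) * e 5))
    * (a • (1:Cl) + ∑ μ : Fin 4, b μ • (e (tIdx μ) * e 5))
    = aα • (1:Cl) + ∑ μ : Fin 4, bα μ • (e (tIdx μ) * e 5) := by
  rw [key_s8 a aα b bα hc, mul_assoc, rev_mul, hnorm, one_smul, mul_one]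

lemma rev_psi (f : (Fin 4 → ℝ) → ℝ) (h : Fin 4 → (Fin 4 → ℝ) → ℝ) (x : Fin 4 → ℝ) :
    reverse (Q := Qm) (ψA f h x)
      = f x • (1:Cl) - ∑ μ : Fin 4, h μ x • (e (tIdx μ) * e 5) := by
  rw [ψA, map_add, map_smul, reverse.map_one, map_sum, sub_eq_add_neg,
    ← Finset.sum_neg_distrib]
  congr 1
  refine Finset.sum_congr rfl fun μ _ => ?_
  rw [map_smul, reverse.map_mul, e, e, reverse_ι, reverse_ι, ← e, ← e,
    e_anticomm (fun hc => tIdx_ne_five μ hc.symm), smul_neg]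

/-! ### Analytic lemmas -/

lemma constraint_deriv (f : (Fin 4 → ℝ) → ℝ) (h : Fin 4 → (Fin 4 → ℝ) → ℝ)
    (hdf : Differentiable ℝ f) (hdh : ∀ μ, Differentiable ℝ (h μ))
    (hnorm : ∀ x, (f x) ^ 2 + ∑ μ : Fin 4, ηv (tIdx μ) * (h μ x) ^ 2 = 1)
    (x : Fin 4 → ℝ) (v : Fin 4 → ℝ) :
    f x * fderiv ℝ f x v
      + ∑ μ : Fin 4, ηv (tIdx μ) * (h μ x * fderiv ℝ (h μ) x v) = 0 := by
  have hF : HasFDerivAt (fun y => (f y) ^ 2 + ∑ μ : Fin 4, ηv (tIdx μ) * (h μ y) ^ 2)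
      ((f x • fderiv ℝ f x + f x • fderiv ℝ f x)
        + ∑ μ : Fin 4, ηv (tIdx μ) • (h μ x • fderiv ℝ (h μ) x + h μ x • fderiv ℝ (h μ) x)) x := by
    have h1 : HasFDerivAt (fun y => (f y) ^ 2)
        (f x • fderiv ℝ f x + f x • fderiv ℝ f x) x := by
      have := ((hdf x).hasFDerivAt.mul (hdf x).hasFDerivAt)
      simp only [pow_two]; exact this
    have h2 : ∀ μ : Fin 4, HasFDerivAt (fun y => ηv (tIdx μ) * (h μ y) ^ 2)
        (ηv (tIdx μ) • (h μ x • fderiv ℝ (h μ) x + h μ x • fderiv ℝ (h μ) x)) x := by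
      intro μ
      have hsq : HasFDerivAt (fun y => (h μ y) ^ 2)
          (h μ x • fderiv ℝ (h μ) x + h μ x • fderiv ℝ (h μ) x) x := by
        have := ((hdh μ x).hasFDerivAt.mul (hdh μ x).hasFDerivAt)
        simp only [pow_two]; exact this
      exact hsq.const_smul (ηv (tIdx μ))
    exact h1.add (HasFDerivAt.fun_sum fun μ _ => h2 μ)
  have hC : HasFDerivAt (fun y => (f y) ^ 2 + ∑ μ : Fin 4, ηv (tIdx μ) * (h μ y) ^ 2)
      (0 : (Fin 4 → ℝ) →L[ℝ] ℝ) x := by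
    have hfun : (fun y => (f y) ^ 2 + ∑ μ : Fin 4, ηv (tIdx μ) * (h μ y) ^ 2)
        = fun _ => (1:ℝ) := funext hnorm
    rw [hfun]
    exact hasFDerivAt_const 1 x
  have h0 := hF.unique hC
  have happ := congrArg (fun (L : (Fin 4 → ℝ) →L[ℝ] ℝ) => L v) h0
  simp only [ContinuousLinearMap.add_apply, ContinuousLinearMap.coe_sum',
    Finset.sum_apply, ContinuousLinearMap.coe_smul', Pi.smul_apply,
    ContinuousLinearMap.zero_apply, smul_eq_mul] at happ
  have hs : ∑ μ : Fin 4, ηv (tIdx μ) * (h μ x * (fderiv ℝ (h μ) x) v + h μ x * (fderiv ℝ (h μ) x) v)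
      = 2 * ∑ μ : Fin 4, ηv (tIdx μ) * (h μ x * fderiv ℝ (h μ) x v) := by
    rw [Finset.mul_sum]
    exact Finset.sum_congr rfl fun μ _ => by ring
  rw [hs] at happ
  linarith

lemma HA_eq (f : (Fin 4 → ℝ) → ℝ) (h : Fin 4 → (Fin 4 → ℝ) → ℝ)
    (hdf : Differentiable ℝ f) (hdh : ∀ μ, Differentiable ℝ (h μ))
    (hf0 : ∀ x, f x ≠ 0) (α μ : Fin 4) (x : Fin 4 → ℝ) :
    HA f h α μ x = 2 * (f x * fderiv ℝ (h μ) x (Pi.single α 1)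
      - h μ x * fderiv ℝ f x (Pi.single α 1)) := by
  set g := fun y => h μ y / f y with hgdef
  have hg : DifferentiableAt ℝ g x := by
    have hge : g = fun y => h μ y * (f y)⁻¹ := funext fun y => div_eq_mul_inv _ _
    rw [hge]
    exact (hdh μ x).mul ((hdf x).inv (hf0 x))
  have hgf : (fun y => g y * f y) = h μ := funext fun y => div_mul_cancel₀ _ (hf0 y)
  have hfd : fderiv ℝ (h μ) x = g x • fderiv ℝ f x + f x • fderiv ℝ g x := by
    rw [← hgf]
    exact fderiv_mul hg (hdf x)
  have h1 := congrArg (fun (L : (Fin 4 → ℝ) →L[ℝ] ℝ) => L (Pi.single α 1)) hfd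
  simp only [ContinuousLinearMap.add_apply, ContinuousLinearMap.coe_smul', Pi.smul_apply,
    smul_eq_mul] at h1
  rw [HA]
  have hgx : g x = h μ x / f x := rfl
  rw [hgx] at h1
  have hfx := hf0 x
  field_simp at h1
  linarith [h1]

lemma ωA_eq (f : (Fin 4 → ℝ) → ℝ) (h : Fin 4 → (Fin 4 → ℝ) → ℝ)
    (hdf : Differentiable ℝ f) (hdh : ∀ μ, Differentiable ℝ (h μ))
    (hf0 : ∀ x, f x ≠ 0) (α μ ν : Fin 4) (x : Fin 4 → ℝ) :
    ωA f h α μ ν x = 2 * (fderiv ℝ (h μ) x (Pi.single α 1) * h ν x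
      - fderiv ℝ (h ν) x (Pi.single α 1) * h μ x) := by
  rw [ωA, HA_eq f h hdf hdh hf0 α μ x, HA_eq f h hdf hdh hf0 α ν x]
  have hfx := hf0 x
  field_simp
  ring

/-- Spin fields of the type `f + Σ_μ f^{μ5}e_μe₅` are normalized and solve the Killing
spin field equation, with extrinsic curvature only in the `e₅`-direction, vanishing normal
connection, and the stated connection coefficients. -/
theorem stmt_8 (nCl : AddGroupNorm Cl)
    (hns : ∀ (c : ℝ) (x : Cl), nCl (c • x) ≤ ‖c‖ * nCl x) :
    letI : NormedAddCommGroup Cl := nCl.toNormedAddCommGroup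
    letI : NormedSpace ℝ Cl := { norm_smul_le := hns }
    ∀ (f : (Fin 4 → ℝ) → ℝ) (h : Fin 4 → (Fin 4 → ℝ) → ℝ),
      Differentiable ℝ f →
      (∀ μ, Differentiable ℝ (h μ)) →
      (∀ x, f x ≠ 0) →
      (∀ x, (f x) ^ 2 + ∑ μ : Fin 4, ηv (tIdx μ) * (h μ x) ^ 2 = 1) →
      (∀ x, reverse (Q := Qm) (ψA f h x) * ψA f h x = 1) ∧
      Differentiable ℝ (ψA f h) ∧
      ∀ (α : Fin 4) (x : Fin 4 → ℝ),
        fderiv ℝ (ψA f h) x (Pi.single α 1) =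
          ((1/4 : ℝ) • ∑ μ : Fin 4, ∑ ν : Fin 4, ωA f h α μ ν x • (e (tIdx μ) * e (tIdx ν))
            + (1/2 : ℝ) • ∑ μ : Fin 4, HA f h α μ x • (e (tIdx μ) * e 5)) * ψA f h x := by
  letI : NormedAddCommGroup Cl := nCl.toNormedAddCommGroup
  letI : NormedSpace ℝ Cl := { norm_smul_le := hns }
  intro f h hdf hdh hf0 hnorm
  have hDψ : ∀ x, HasFDerivAt (ψA f h)
      ((fderiv ℝ f x).smulRight (1:Cl)
        + ∑ μ : Fin 4, (fderiv ℝ (h μ) x).smulRight (e (tIdx μ) * e 5)) x := by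
    intro x
    have h1 : HasFDerivAt (fun y => f y • (1:Cl)) ((fderiv ℝ f x).smulRight (1:Cl)) x :=
      ((hdf x).hasFDerivAt).smul_const (1:Cl)
    have h2 : HasFDerivAt (fun y => ∑ μ : Fin 4, h μ y • (e (tIdx μ) * e 5))
        (∑ μ : Fin 4, (fderiv ℝ (h μ) x).smulRight (e (tIdx μ) * e 5)) x :=
      HasFDerivAt.fun_sum fun μ _ => ((hdh μ x).hasFDerivAt).smul_const _
    exact h1.add h2
  refine ⟨?_, fun x => (hDψ x).differentiableAt, ?_⟩
  · intro x
    rw [rev_psi, ψA, rev_mul, hnorm, one_smul]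
  · intro α x
    have hL := congrArg (fun (L : (Fin 4 → ℝ) →L[ℝ] Cl) => L (Pi.single α 1)) (hDψ x).fderiv
    simp only [ContinuousLinearMap.add_apply, ContinuousLinearMap.coe_sum',
      Finset.sum_apply, ContinuousLinearMap.smulRight_apply] at hL
    rw [hL]
    have hω : (∑ μ : Fin 4, ∑ ν : Fin 4, ωA f h α μ ν x • (e (tIdx μ) * e (tIdx ν)))
        = ∑ μ : Fin 4, ∑ ν : Fin 4,
            (2*(fderiv ℝ (h μ) x (Pi.single α 1) * h ν x
              - fderiv ℝ (h ν) x (Pi.single α 1) * h μ x)) • (e (tIdx μ) * e (tIdx ν)) :=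
      Finset.sum_congr rfl fun μ _ => Finset.sum_congr rfl fun ν _ => by
        rw [ωA_eq f h hdf hdh hf0]
    have hH : (∑ μ : Fin 4, HA f h α μ x • (e (tIdx μ) * e 5))
        = ∑ μ : Fin 4, (2*(f x * fderiv ℝ (h μ) x (Pi.single α 1)
            - h μ x * fderiv ℝ f x (Pi.single α 1))) • (e (tIdx μ) * e 5) :=
      Finset.sum_congr rfl fun μ _ => by rw [HA_eq f h hdf hdh hf0]
    rw [hω, hH, ψA]
    exact (keyfinal (f x) (fderiv ℝ f x (Pi.single α 1)) (fun μ => h μ x)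
      (fun μ => fderiv ℝ (h μ) x (Pi.single α 1))
      (constraint_deriv f h hdf hdh hnorm x (Pi.single α 1)) (hnorm x)).symm
end
end
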